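/- Let q = 2^ℓ with ℓ ≥ 1, and let a, b be nonnegative integers with a ≤ q−1 and b ≤ q^2−1. Write b = wq + b' with b' < q. Suppose: (i) b' < 2^{ℓ−1} and w ≡ 0 mod 2^i for some 1 ≤ i ≤ ℓ; (ii) a < 2^{ℓ−1}; (iii) there exists 0 ≤ s ≤ i−1 with bit s of a and bit s of b' both equal to 0. Then for every α, β ∈ F_{q^2} such that p_{α,β}(t) = t^{q+1} + α^q t^q + α t + (β + β^q) has q+1 distinct roots in F_{q^2}, the remainder of (αt+β)^a t^b modulo p_{α,β}(t) has degree strictly less than q. -/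

import Mathlib

open Polynomial


lemma hl_testBit_div (u n t : ℕ) : (u / 2 ^ n).testBit t = u.testBit (n + t) := by
  rw [Nat.testBit_eq_decide_div_mod_eq, Nat.testBit_eq_decide_div_mod_eq, Nat.div_div_eq_div_mul, ← pow_add]

lemma hl_submask_lt {u v n : ℕ} (h : ∀ t, u.testBit t = true → v.testBit t = true)
    (hv : v < 2 ^ n) : u < 2 ^ n := by
  have hdiv : u / 2 ^ n = 0 := by
    apply Nat.zero_of_testBit_eq_false
    intro t
    rw [hl_testBit_div]
    cases hu : u.testBit (n + t)
    · rfl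
    · have h1 := h _ hu
      have hf : v.testBit (n + t) = false := Nat.testBit_eq_false_of_lt
        (lt_of_lt_of_le hv (Nat.pow_le_pow_right (by norm_num) (Nat.le_add_right _ _)))
      rw [hf] at h1; exact absurd h1 Bool.false_ne_true
  have hdm := Nat.div_add_mod u (2 ^ n)
  have hml := Nat.mod_lt u (y := 2 ^ n) (Nat.pow_pos (by norm_num))
  rw [hdiv, Nat.mul_zero, Nat.zero_add] at hdm
  omega

lemma hl_lt_pow {X s : ℕ} (h1 : X < 2 ^ (s + 1)) (h2 : X.testBit s = false) : X < 2 ^ s := by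
  by_contra h
  push_neg at h
  have he : 2 ^ (s + 1) = 2 ^ s * 2 := pow_succ 2 s
  have hdiv : X / 2 ^ s = 1 := Nat.div_eq_of_lt_le (by omega) (by omega)
  rw [Nat.testBit_eq_decide_div_mod_eq, hdiv] at h2
  simp at h2

lemma hl_no_carry {x y s i : ℕ} (hs : s < i) (hx : x.testBit s = false)
    (hy : y.testBit s = false) (h : 2 ^ i ∣ x + y + 1) : False := by
  have h2 : 2 ^ (s + 1) ∣ x + y + 1 := dvd_trans (pow_dvd_pow 2 hs) h
  have hX : x % 2 ^ (s + 1) < 2 ^ s := hl_lt_pow (Nat.mod_lt _ (Nat.pow_pos (by norm_num)))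
    (by rw [Nat.testBit_mod_two_pow]; simp [hx])
  have hY : y % 2 ^ (s + 1) < 2 ^ s := hl_lt_pow (Nat.mod_lt _ (Nat.pow_pos (by norm_num)))
    (by rw [Nat.testBit_mod_two_pow]; simp [hy])
  have hdx := Nat.div_add_mod x (2 ^ (s + 1))
  have hdy := Nat.div_add_mod y (2 ^ (s + 1))
  have hsum : x + y + 1 = 2 ^ (s + 1) * (x / 2 ^ (s + 1) + y / 2 ^ (s + 1))
      + (x % 2 ^ (s + 1) + y % 2 ^ (s + 1) + 1) := by
    rw [Nat.mul_add]; omega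
  rw [hsum] at h2
  have hd : 2 ^ (s + 1) ∣ (x % 2 ^ (s + 1) + y % 2 ^ (s + 1) + 1) :=
    (Nat.dvd_add_right (dvd_mul_right _ _)).mp h2
  have hle := Nat.le_of_dvd (by omega) hd
  have he : 2 ^ (s + 1) = 2 ^ s + 2 ^ s := by rw [pow_succ]; omega
  omega

lemma hl_choose_bit : ∀ (t n k : ℕ), ¬ 2 ∣ n.choose k → k.testBit t = true → n.testBit t = true := by
  haveI : Fact (Nat.Prime 2) := ⟨Nat.prime_two⟩
  intro t
  induction t with
  | zero =>
    intro n k h hk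
    have hmod := Choose.choose_modEq_choose_mod_mul_choose_div_nat (n := n) (k := k) (p := 2)
    unfold Nat.ModEq at hmod
    rw [Nat.testBit_zero, decide_eq_true_eq] at hk ⊢
    have h1 : n.choose k % 2 = 1 := by omega
    by_contra hn
    have hn0 : n % 2 = 0 := by omega
    rw [hn0, hk] at hmod
    simp [Nat.choose] at hmod
    omega
  | succ t ih =>
    intro n k h hk
    have hmod := Choose.choose_modEq_choose_mod_mul_choose_div_nat (n := n) (k := k) (p := 2)
    unfold Nat.ModEq at hmod
    have h1 : ¬ 2 ∣ (n / 2).choose (k / 2) := fun hd => h (Nat.modEq_zero_iff_dvd.mp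
      (hmod.trans (Nat.modEq_zero_iff_dvd.mpr (hd.mul_left _))))
    rw [Nat.testBit_succ] at hk ⊢
    exact ih _ _ h1 hk

lemma hl_core {ℓ q i s w b' a b j m : ℕ} (hq : q = 2 ^ ℓ) (hℓ : 1 ≤ ℓ)
    (hbw : b = w * q + b') (hb'q : b' < q) (hwq : w < q)
    (hb' : b' < 2 ^ (ℓ - 1)) (ha' : a < 2 ^ (ℓ - 1))
    (hsi : s < i) (hw : w % 2 ^ i = 0)
    (has : a.testBit s = false) (hb's : b'.testBit s = false)
    (hj : ∀ t, j.testBit t = true → a.testBit t = true)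
    (hm : ∀ t, m.testBit t = true → b.testBit t = true)
    (hk : (j + m) % (q + 1) = q) : False := by
  have h2l : 2 ^ (ℓ - 1) + 2 ^ (ℓ - 1) = q := by
    rw [hq, ← two_mul, ← pow_succ']
    congr 1
    omega
  have hbmod : b % q = b' := by
    rw [hbw, add_comm, Nat.add_mul_mod_self_right, Nat.mod_eq_of_lt hb'q]
  have hbdiv : b / q = w := by
    rw [hbw, add_comm, Nat.add_mul_div_right _ _ (show 0 < q by omega),
      Nat.div_eq_of_lt hb'q, zero_add]
  have hm₀sub : ∀ t, (m % q).testBit t = true → b'.testBit t = true := by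
    intro t ht
    rw [hq, Nat.testBit_mod_two_pow, Bool.and_eq_true, decide_eq_true_eq] at ht
    have h2 := hm t ht.2
    rw [← hbmod, hq, Nat.testBit_mod_two_pow, h2]
    simp [ht.1]
  have hm₁sub : ∀ t, (m / q).testBit t = true → w.testBit t = true := by
    intro t ht
    rw [hq, hl_testBit_div] at ht
    have h2 := hm _ ht
    rw [← hbdiv, hq, hl_testBit_div]
    exact h2
  have hm₀lt : m % q < 2 ^ (ℓ - 1) := hl_submask_lt hm₀sub hb'
  have hjlt : j < 2 ^ (ℓ - 1) := hl_submask_lt hj ha'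
  have hm₁lt : m / q < q := by
    have h2 : m / q < 2 ^ ℓ := hl_submask_lt hm₁sub (by rw [← hq]; exact hwq)
    omega
  have hmdec : m = q * (m / q) + m % q := (Nat.div_add_mod m q).symm
  have hdvdN : (q + 1) ∣ (j + m + 1) := by
    have hdm := Nat.div_add_mod (j + m) (q + 1)
    exact ⟨(j + m) / (q + 1) + 1, by rw [Nat.mul_add, Nat.mul_one]; omega⟩
  obtain ⟨m₀, m₁, hm0, hm1⟩ : ∃ m₀ m₁, m % q = m₀ ∧ m / q = m₁ := ⟨_, _, rfl, rfl⟩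
  rw [hm0] at hm₀lt hm₀sub
  rw [hm1] at hm₁lt hm₁sub
  rw [hm0, hm1] at hmdec
  have hA : m₁ = j + m₀ + 1 := by
    have e1 : j + m + 1 = q * m₁ + (j + m₀ + 1) := by omega
    have d1 : (q + 1) ∣ (q * m₁ + (j + m₀ + 1)) := e1 ▸ hdvdN
    have d2 : (q + 1) ∣ (q + 1) * m₁ := dvd_mul_right _ _
    have hq1 : (q + 1) * m₁ = q * m₁ + m₁ := by ring
    have hA1 : j + m₀ + 1 ≤ q - 1 := by omega
    rcases le_or_gt m₁ (j + m₀ + 1) with h | h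
    · have hds := Nat.dvd_sub d1 d2
      have heq : (q * m₁ + (j + m₀ + 1)) - (q + 1) * m₁ = (j + m₀ + 1) - m₁ := by omega
      rw [heq] at hds
      have h0 := Nat.eq_zero_of_dvd_of_lt hds (by omega)
      omega
    · have hds := Nat.dvd_sub d2 d1
      have heq : (q + 1) * m₁ - (q * m₁ + (j + m₀ + 1)) = m₁ - (j + m₀ + 1) := by omega
      rw [heq] at hds
      have h0 := Nat.eq_zero_of_dvd_of_lt hds (by omega)
      omega
  have hwbits : ∀ t, t < i → w.testBit t = false := by
    intro t ht
    have h1 : (w % 2 ^ i).testBit t = (decide (t < i) && w.testBit t) := Nat.testBit_mod_two_pow ..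
    rw [hw, Nat.zero_testBit] at h1
    simpa [ht] using h1.symm
  have hm₁bits : ∀ t, t < i → m₁.testBit t = false := by
    intro t ht
    cases h : m₁.testBit t
    · rfl
    · have h2 := hm₁sub t h
      rw [hwbits t ht] at h2
      exact absurd h2 Bool.false_ne_true
  have hm₁mod : m₁ % 2 ^ i = 0 := by
    apply Nat.zero_of_testBit_eq_false
    intro t
    rw [Nat.testBit_mod_two_pow]
    rcases lt_or_ge t i with h | h
    · simp [hm₁bits t h]
    · simp [Nat.not_lt.mpr h]
  have hdvd2 : 2 ^ i ∣ j + m₀ + 1 := hA ▸ Nat.dvd_of_mod_eq_zero hm₁mod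
  have hjs : j.testBit s = false := by
    cases h : j.testBit s
    · rfl
    · have h2 := hj s h
      rw [has] at h2
      exact absurd h2 Bool.false_ne_true
  have hm₀s : m₀.testBit s = false := by
    cases h : m₀.testBit s
    · rfl
    · have h2 := hm₀sub s h
      rw [hb's] at h2
      exact absurd h2 Bool.false_ne_true
  exact hl_no_carry hsi hjs hm₀s hdvd2

lemma hl_coeff_linear_pow {F : Type*} [CommRing F] (u v : F) (n k : ℕ) :
    ((C u * X + C v) ^ n).coeff k = (n.choose k : F) * u ^ k * v ^ (n - k) := by
  rw [add_pow, finset_sum_coeff]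
  have hterm : ∀ j, (C u * X) ^ j * C v ^ (n - j) * (n.choose j : F[X])
      = C (u ^ j * v ^ (n - j) * (n.choose j : F)) * X ^ j := by
    intro j
    rw [← C_eq_natCast, mul_pow, C_mul, C_mul, C_pow, C_pow]
    ring
  rcases le_or_gt k n with hk | hk
  · rw [Finset.sum_eq_single k]
    · rw [hterm, coeff_C_mul, coeff_X_pow, if_pos rfl, mul_one]
      ring
    · intro j _ hjk
      rw [hterm, coeff_C_mul, coeff_X_pow, if_neg (fun h => hjk h.symm), mul_zero]
    · intro hk2
      exact absurd (Finset.mem_range.mpr (by omega)) hk2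
  · rw [Nat.choose_eq_zero_of_lt hk, Nat.cast_zero, zero_mul, zero_mul]
    apply Finset.sum_eq_zero
    intro j hj
    rw [Finset.mem_range] at hj
    rw [hterm, coeff_C_mul, coeff_X_pow, if_neg (by omega), mul_zero]

lemma hl_dvd_red {F : Type*} [Field F] [CharP F 2] (Δ : F) (n k : ℕ) (c : F) :
    (X ^ n + C Δ : F[X]) ∣ C c * X ^ k - C (c * Δ ^ (k / n)) * X ^ (k % n) := by
  have h2 : (X ^ n + C Δ : F[X]) = X ^ n - C Δ := by rw [CharTwo.sub_eq_add]
  have h1 : (X ^ n - C Δ : F[X]) ∣ (X ^ n) ^ (k / n) - (C Δ) ^ (k / n) :=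
    sub_dvd_pow_sub_pow _ _ _
  have h3 : C c * X ^ k - C (c * Δ ^ (k / n)) * X ^ (k % n)
      = (C c * X ^ (k % n)) * ((X ^ n) ^ (k / n) - (C Δ) ^ (k / n)) := by
    have hk : (X : F[X]) ^ k = (X ^ n) ^ (k / n) * X ^ (k % n) := by
      rw [← pow_mul, ← pow_add]
      congr 1
      exact (Nat.div_add_mod k n).symm
    rw [hk, C_mul, C_pow]
    ring
  rw [h2, h3]
  exact Dvd.dvd.mul_left h1 _

lemma hl_modByMonic_eq {F : Type*} [Field F] {p f g : F[X]} (hp : p.Monic)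
    (hdvd : p ∣ f - g) (hdeg : g.degree < p.degree) : f %ₘ p = g := by
  have h1 : f %ₘ p - g = (f - g) - p * (f /ₘ p) := by
    rw [Polynomial.modByMonic_eq_sub_mul_div f p]
    ring
  have h2 : p ∣ f %ₘ p - g := by
    rw [h1]
    exact dvd_sub hdvd (dvd_mul_right _ _)
  have h3 : (f %ₘ p - g).degree < p.degree :=
    lt_of_le_of_lt (Polynomial.degree_sub_le _ _)
      (max_lt (Polynomial.degree_modByMonic_lt f hp) hdeg)
  have h4 := Polynomial.eq_zero_of_dvd_of_degree_lt h2 h3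
  have := sub_eq_zero.mp h4
  exact this

/-- Claim 1: if `a ≤ q-1`, `b = wq + b' ≤ q^2-1` with `b' < q` satisfy
(i) `b' < 2^(ℓ-1)` and `w ≡ 0 (mod 2^i)` for some `1 ≤ i ≤ ℓ`, (ii) `a < 2^(ℓ-1)`, and
(iii) some bit `s ≤ i-1` of both `a` and `b'` is zero, then for every `α, β` such that
`p_{α,β}(t) = t^(q+1) + α^q t^q + α t + (β + β^q)` has `q+1` distinct roots in `F_{q^2}`,
the remainder of `(αt+β)^a t^b` modulo `p_{α,β}` has degree strictly less than `q`. -/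
theorem stmt_19 {ℓ q : ℕ} (hq : q = 2 ^ ℓ) (hℓ : 1 ≤ ℓ) {F : Type*} [Field F] [Fintype F]
    (hF : Fintype.card F = q ^ 2) (a b w b' : ℕ) (ha : a ≤ q - 1) (hb : b ≤ q ^ 2 - 1)
    (hbw : b = w * q + b') (hb'q : b' < q)
    (hb' : b' < 2 ^ (ℓ - 1)) (ha' : a < 2 ^ (ℓ - 1))
    (hi : ∃ i, 1 ≤ i ∧ i ≤ ℓ ∧ w % 2 ^ i = 0 ∧
      ∃ s, s < i ∧ Nat.testBit a s = false ∧ Nat.testBit b' s = false)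
    (α β : F)
    (hroots : ∃ s : Finset F, s.card = q + 1 ∧ ∀ x ∈ s,
      Polynomial.eval x
        (X ^ (q + 1) + C (α ^ q) * X ^ q + C α * X + C (β + β ^ q) : F[X]) = 0) :
    (((C α * X + C β) ^ a * X ^ b : F[X]) %ₘ
        (X ^ (q + 1) + C (α ^ q) * X ^ q + C α * X + C (β + β ^ q))).degree
      < (q : ℕ) := by
  obtain ⟨i, hi1, hiℓ, hw, s, hsi, has, hb's⟩ := hi
  clear hroots
  have hq2 : 2 ≤ q := by
    rw [hq]
    calc 2 = 2 ^ 1 := (pow_one 2).symm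
    _ ≤ 2 ^ ℓ := Nat.pow_le_pow_right (by norm_num) hℓ
  haveI hfact : Fact (Nat.Prime 2) := ⟨Nat.prime_two⟩
  haveI hchar2 : CharP F 2 := by
    haveI hrc := ringChar.charP F
    have hprime : Nat.Prime (ringChar F) := CharP.char_is_prime F (ringChar F)
    have hdvd : ringChar F ∣ 2 ^ (2 * ℓ) := by
      have hcz : ((Fintype.card F : ℕ) : F) = 0 := FiniteField.cast_card_eq_zero F
      rw [hF, hq, ← pow_mul, mul_comm ℓ 2] at hcz
      exact (CharP.cast_eq_zero_iff F (ringChar F) _).mp hcz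
    have h2 : ringChar F = 2 :=
      (Nat.prime_dvd_prime_iff_eq hprime Nat.prime_two).mp (hprime.dvd_of_dvd_pow hdvd)
    rw [← h2]
    exact hrc
  have hx₀q : (α ^ q) ^ q = α := by
    rw [← pow_mul]
    have hqq : q * q = Fintype.card F := by rw [hF]; ring
    rw [hqq, FiniteField.pow_card]
  set γ : F := β + β ^ q with hγdef
  set pP : F[X] := X ^ (q + 1) + C (α ^ q) * X ^ q + C α * X + C γ with hpdef
  set f : F[X] := (C α * X + C β) ^ a * X ^ b with hfdef
  set y₀ : F := α * α ^ q + β with hy₀def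
  set Δ : F := α * α ^ q + γ with hΔdef
  set f₁ : F[X] := (C α * X + C y₀) ^ a * (X + C (α ^ q)) ^ b with hf₁def
  set P₂ : F[X] := X ^ (q + 1) + C Δ with hP₂def
  -- Claim B: coefficients of f₁ vanish at exponents ≡ q (mod q+1)
  have hB : ∀ k, k % (q + 1) = q → f₁.coeff k = 0 := by
    intro k hk
    rw [hf₁def, coeff_mul]
    apply Finset.sum_eq_zero
    rintro ⟨j, m⟩ hjm
    rw [Finset.HasAntidiagonal.mem_antidiagonal] at hjm
    have hXB : ((X + C (α ^ q) : F[X]) ^ b).coeff m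
        = (b.choose m : F) * 1 ^ m * (α ^ q) ^ (b - m) := by
      rw [← hl_coeff_linear_pow, C_1, one_mul]
    rw [hl_coeff_linear_pow, hXB]
    by_cases hodd : 2 ∣ a.choose j * b.choose m
    · have hcast : ((a.choose j * b.choose m : ℕ) : F) = 0 :=
        (CharP.cast_eq_zero_iff F 2 _).mpr hodd
      push_cast at hcast
      rw [show ((a.choose j : F) * α ^ j * y₀ ^ (a - j))
            * ((b.choose m : F) * 1 ^ m * (α ^ q) ^ (b - m))
          = ((a.choose j : F) * (b.choose m : F))
            * (α ^ j * y₀ ^ (a - j) * 1 ^ m * (α ^ q) ^ (b - m)) from by ring,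
        hcast, zero_mul]
    · exfalso
      have hja : ¬ 2 ∣ a.choose j := fun h2 => hodd (h2.mul_right _)
      have hmb : ¬ 2 ∣ b.choose m := fun h2 => hodd (h2.mul_left _)
      have hwq : w < q := by
        have hqq : q * q = q ^ 2 := (sq q).symm
        have h11 : 1 * 1 ≤ q * q := Nat.mul_le_mul (by omega) (by omega)
        by_contra hcon
        push_neg at hcon
        have hmul : q * q ≤ w * q := Nat.mul_le_mul_right q hcon
        omega
      exact hl_core hq hℓ hbw hb'q hwq hb' ha' hsi hw has hb's
        (fun t => hl_choose_bit t a j hja) (fun t => hl_choose_bit t b m hmb)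
        (by rw [hjm]; exact hk)
  set g₁ : F[X] := ∑ k ∈ f₁.support,
      C (f₁.coeff k * Δ ^ (k / (q + 1))) * X ^ (k % (q + 1)) with hg₁def
  have hdvd₁ : P₂ ∣ f₁ - g₁ := by
    have hsplit : f₁ - g₁ = ∑ k ∈ f₁.support,
        (C (f₁.coeff k) * X ^ k - C (f₁.coeff k * Δ ^ (k / (q + 1))) * X ^ (k % (q + 1))) := by
      rw [Finset.sum_sub_distrib]
      congr 1
      exact f₁.as_sum_support_C_mul_X_pow
    rw [hsplit, hP₂def]
    exact Finset.dvd_sum fun k _ => hl_dvd_red Δ (q + 1) k _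
  have hdeg₁ : g₁.degree < (q : ℕ) := by
    rw [hg₁def]
    refine lt_of_le_of_lt (Polynomial.degree_sum_le _ _) ?_
    refine (Finset.sup_lt_iff (by exact_mod_cast WithBot.bot_lt_coe q)).mpr ?_
    intro k hk
    refine lt_of_le_of_lt (Polynomial.degree_C_mul_X_pow_le _ _) ?_
    have h1 : k % (q + 1) ≠ q := fun h => (Polynomial.mem_support_iff.mp hk) (hB k h)
    have h2 : k % (q + 1) < q + 1 := Nat.mod_lt _ (by omega)
    exact_mod_cast (by omega : k % (q + 1) < q)
  -- the substitution T = X + C (α^q)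
  have hTT : ((X + C (α ^ q) : F[X])).comp (X + C (α ^ q)) = X := by
    rw [add_comp, X_comp, C_comp, add_assoc, ← C_add, CharTwo.add_self_eq_zero, C_0, add_zero]
  have hTq : (X + C (α ^ q) : F[X]) ^ q = X ^ q + C α := by
    rw [hq, add_pow_char_pow]
    congr 1
    rw [← C_pow, ← hq, hx₀q]
  have hTq1 : (X + C (α ^ q) : F[X]) ^ (q + 1)
      = X ^ (q + 1) + C (α ^ q) * X ^ q + C α * X + C α * C (α ^ q) := by
    rw [pow_succ, hTq]
    ring
  have hPT : P₂.comp (X + C (α ^ q)) = pP := by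
    rw [hP₂def, add_comp, X_pow_comp, C_comp, hTq1, hpdef]
    have hc : (C α * C (α ^ q) + C Δ : F[X]) = C γ := by
      rw [← C_mul, hΔdef, ← C_add, ← add_assoc, CharTwo.add_self_eq_zero, zero_add]
    linear_combination hc
  have hfcomp : f₁ = f.comp (X + C (α ^ q)) := by
    have hbase : (C α * X + C y₀ : F[X]) = C α * (X + C (α ^ q)) + C β := by
      rw [hy₀def, C_add, C_mul]
      ring
    rw [hf₁def, hfdef, mul_comp, pow_comp, pow_comp, add_comp, mul_comp, C_comp, X_comp, C_comp,
      hbase]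
  have hfTT : f₁.comp (X + C (α ^ q)) = f := by
    rw [hfcomp, Polynomial.comp_assoc, hTT, comp_X]
  -- divisibility at the p level
  obtain ⟨h, hh⟩ := hdvd₁
  have hdvd : pP ∣ f - g₁.comp (X + C (α ^ q)) := by
    refine ⟨h.comp (X + C (α ^ q)), ?_⟩
    calc f - g₁.comp (X + C (α ^ q))
        = (f₁ - g₁).comp (X + C (α ^ q)) := by rw [Polynomial.sub_comp, hfTT]
      _ = (P₂ * h).comp (X + C (α ^ q)) := by rw [hh]
      _ = pP * h.comp (X + C (α ^ q)) := by rw [Polynomial.mul_comp, hPT]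
  have hdegg : (g₁.comp (X + C (α ^ q))).degree < (q : ℕ) := by
    have hnd : g₁.natDegree < q := by
      by_cases h0 : g₁ = 0
      · rw [h0]
        simpa using (by omega : 0 < q)
      · exact (Polynomial.natDegree_lt_iff_degree_lt h0).mpr hdeg₁
    have hc : (g₁.comp (X + C (α ^ q))).natDegree = g₁.natDegree := by
      rw [Polynomial.natDegree_comp, Polynomial.natDegree_X_add_C, mul_one]
    calc (g₁.comp (X + C (α ^ q))).degree
        ≤ ((g₁.comp (X + C (α ^ q))).natDegree : ℕ) := Polynomial.degree_le_natDegree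
      _ < (q : ℕ) := by rw [hc]; exact_mod_cast hnd
  -- monicity and degree of pP
  have hrest : (C (α ^ q) * X ^ q + C α * X + C γ : F[X]).degree < ((q + 1 : ℕ) : WithBot ℕ) := by
    refine lt_of_le_of_lt (Polynomial.degree_add_le _ _)
      (max_lt (lt_of_le_of_lt (Polynomial.degree_add_le _ _) (max_lt ?_ ?_)) ?_)
    · exact lt_of_le_of_lt (Polynomial.degree_C_mul_X_pow_le _ _)
        (by exact_mod_cast Nat.lt_succ_self q)
    · rw [show (C α * X : F[X]) = C α * X ^ 1 from by rw [pow_one]]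
      exact lt_of_le_of_lt (Polynomial.degree_C_mul_X_pow_le _ _)
        (by exact_mod_cast (by omega : 1 < q + 1))
    · exact lt_of_le_of_lt Polynomial.degree_C_le
        (by exact_mod_cast (by omega : 0 < q + 1))
  have hpassoc : pP = X ^ (q + 1) + (C (α ^ q) * X ^ q + C α * X + C γ) := by
    rw [hpdef]
    ring
  have hmonic : pP.Monic := by
    rw [hpassoc]
    exact Polynomial.monic_X_pow_add hrest
  have hdegp : pP.degree = ((q + 1 : ℕ) : WithBot ℕ) := by
    rw [hpassoc,
      Polynomial.degree_add_eq_left_of_degree_lt (by rw [Polynomial.degree_X_pow]; exact hrest),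
      Polynomial.degree_X_pow]
  have hlt : (g₁.comp (X + C (α ^ q))).degree < pP.degree := by
    rw [hdegp]
    exact lt_trans hdegg (by exact_mod_cast Nat.lt_succ_self q)
  rw [hl_modByMonic_eq hmonic hdvd hlt]
  exact hdegg
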